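/- Let R be symmetric positive definite and F skew-symmetric, and let G = (R+F)^{-1}(R-F). Then for every vector x, ((G x)^T R (G x)) = x^T R x; consequently every eigenvalue of G has absolute value 1 and all powers G^k are bounded in norm (the scheme is stable). -/

import Mathlib

open Matrix

/-- For `R` symmetric positive definite, `F` skew-symmetric and
`G = (R+F)⁻¹ (R-F)`: the quadratic form `xᵀ R x` is preserved by `G`,
every (complex) eigenvalue of `G` has absolute value `1`, and all powers
`G^k` are bounded (in entries, hence in norm): the scheme is stable. -/
theorem stmt2 {n : ℕ} (R F : Matrix (Fin n) (Fin n) ℝ)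
    (hRsym : Rᵀ = R) (hRpd : ∀ x : Fin n → ℝ, x ≠ 0 → 0 < x ⬝ᵥ (R *ᵥ x))
    (hF : Fᵀ = -F) (G : Matrix (Fin n) (Fin n) ℝ)
    (hG : G = (R + F)⁻¹ * (R - F)) :
    (∀ x : Fin n → ℝ, (G *ᵥ x) ⬝ᵥ (R *ᵥ (G *ᵥ x)) = x ⬝ᵥ (R *ᵥ x)) ∧
    (∀ (μ : ℂ) (v : Fin n → ℂ), v ≠ 0 →
      (G.map (Complex.ofReal : ℝ → ℂ)) *ᵥ v = μ • v → ‖μ‖ = 1) ∧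
    (∃ Cb : ℝ, ∀ (k : ℕ) (i j : Fin n), |(G ^ k) i j| ≤ Cb) := by
  have hskew : ∀ x : Fin n → ℝ, x ⬝ᵥ (F *ᵥ x) = 0 := by
    intro x
    have h1 : x ⬝ᵥ (F *ᵥ x) = (Fᵀ *ᵥ x) ⬝ᵥ x := by
      rw [Matrix.dotProduct_mulVec, Matrix.mulVec_transpose]
    rw [hF, Matrix.neg_mulVec, neg_dotProduct] at h1
    have h2 := dotProduct_comm (F *ᵥ x) x
    linarith
  have hdet : IsUnit (R + F).det := by
    rw [isUnit_iff_ne_zero]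
    intro h0
    obtain ⟨v, hv, hv0⟩ := (Matrix.exists_mulVec_eq_zero_iff).2 h0
    have h : v ⬝ᵥ ((R + F) *ᵥ v) = 0 := by rw [hv0, dotProduct_zero]
    rw [Matrix.add_mulVec, dotProduct_add, hskew, add_zero] at h
    exact absurd h (ne_of_gt (hRpd v hv))
  have key : (R + F) * G = R - F := by
    rw [hG, ← Matrix.mul_assoc, Matrix.mul_nonsing_inv _ hdet, Matrix.one_mul]
  have key2 : Gᵀ * (R - F) = R + F := by
    have h := congrArg Matrix.transpose key
    rwa [Matrix.transpose_mul, Matrix.transpose_add, Matrix.transpose_sub, hRsym, hF,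
      sub_neg_eq_add] at h
  have hGRG : Gᵀ * R * G = R := by
    have eq1 : Gᵀ * (R + F) * G = R + F := by rw [Matrix.mul_assoc, key, key2]
    have eq2 : Gᵀ * (R - F) * G = R - F := by rw [key2, key]
    have hsum : (2 : ℝ) • (Gᵀ * R * G) = (2 : ℝ) • R := by
      have h := congrArg₂ (· + ·) eq1 eq2
      simp only [Matrix.mul_add, Matrix.mul_sub, Matrix.add_mul, Matrix.sub_mul] at h
      rw [two_smul, two_smul]
      abel_nf; abel_nf at h
      linear_combination (norm := abel) h
    exact smul_right_injective _ (two_ne_zero) hsum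
  -- Part 1
  have part1 : ∀ x : Fin n → ℝ, (G *ᵥ x) ⬝ᵥ (R *ᵥ (G *ᵥ x)) = x ⬝ᵥ (R *ᵥ x) := by
    intro x
    conv_rhs => rw [← hGRG]
    rw [Matrix.mulVec_mulVec, Matrix.dotProduct_mulVec, Matrix.dotProduct_mulVec]
    congr 1
    rw [← Matrix.vecMul_transpose, Matrix.vecMul_vecMul, Matrix.mul_assoc]
  have hnn : ∀ x : Fin n → ℝ, 0 ≤ x ⬝ᵥ (R *ᵥ x) := by
    intro x
    by_cases hx : x = 0
    · simp [hx]
    · exact (hRpd x hx).le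
  refine ⟨part1, ?_, ?_⟩
  · -- Part 2: eigenvalues
    intro μ v hv hev
    set oc : ℝ →+* ℂ := Complex.ofRealHom with hoc
    have hocfun : (Complex.ofReal : ℝ → ℂ) = ⇑oc := rfl
    set Gc := G.map (Complex.ofReal : ℝ → ℂ) with hGc
    set Rc := R.map (Complex.ofReal : ℝ → ℂ) with hRc
    have hGRGc : (Gᵀ.map (Complex.ofReal : ℝ → ℂ)) * Rc * Gc = Rc := by
      have h := congrArg (fun M : Matrix (Fin n) (Fin n) ℝ => M.map oc) hGRG
      simpa [Matrix.map_mul, hocfun, hRc, hGc] using h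
    have hconjT : Gcᴴ = Gᵀ.map (Complex.ofReal : ℝ → ℂ) := by
      ext i j
      simp [Matrix.conjTranspose_apply, Matrix.map_apply, Complex.conj_ofReal, hGc]
    set q : ℂ := star v ⬝ᵥ (Rc *ᵥ v) with hq
    have hlhs : star (Gc *ᵥ v) ⬝ᵥ (Rc *ᵥ (Gc *ᵥ v)) = q := by
      rw [Matrix.star_mulVec, Matrix.mulVec_mulVec, Matrix.dotProduct_mulVec,
        Matrix.vecMul_vecMul, ← Matrix.dotProduct_mulVec, hconjT, ← Matrix.mul_assoc, hGRGc]
    have hrhs : star (Gc *ᵥ v) ⬝ᵥ (Rc *ᵥ (Gc *ᵥ v)) = ((Complex.normSq μ : ℝ) : ℂ) * q := by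
      rw [hev, star_smul, Matrix.mulVec_smul, smul_dotProduct, dotProduct_smul,
        smul_eq_mul, smul_eq_mul, ← mul_assoc]
      rw [show star μ * μ = ((Complex.normSq μ : ℝ) : ℂ) by
        rw [Complex.star_def, mul_comm, Complex.mul_conj]]
    -- q has positive real part
    set a : Fin n → ℝ := fun i => (v i).re with ha
    set b : Fin n → ℝ := fun i => (v i).im with hb
    have hqre : q.re = a ⬝ᵥ (R *ᵥ a) + b ⬝ᵥ (R *ᵥ b) := by
      have h1 : q.re = ∑ i, ∑ j, R i j * (a i * a j + b i * b j) := by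
        simp only [hq, dotProduct, Matrix.mulVec, Matrix.map_apply, Pi.star_apply,
          Finset.mul_sum, hRc]
        rw [Complex.re_sum]
        refine Finset.sum_congr rfl fun i _ => ?_
        rw [Complex.re_sum]
        refine Finset.sum_congr rfl fun j _ => ?_
        simp [Complex.mul_re, Complex.mul_im, ha, hb]
        ring
      rw [h1]
      simp only [dotProduct, Matrix.mulVec, Finset.mul_sum]
      rw [← Finset.sum_add_distrib]
      refine Finset.sum_congr rfl fun i _ => ?_
      rw [← Finset.sum_add_distrib]
      refine Finset.sum_congr rfl fun j _ => ?_
      ring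
    have hab : a ≠ 0 ∨ b ≠ 0 := by
      by_contra hcon
      push_neg at hcon
      apply hv
      funext i
      have h1 := congrFun hcon.1 i
      have h2 := congrFun hcon.2 i
      simp only [ha, hb, Pi.zero_apply] at h1 h2
      exact Complex.ext h1 h2
    have hqpos : 0 < q.re := by
      rw [hqre]
      rcases hab with h | h
      · have := hRpd a h; have := hnn b; linarith
      · have := hRpd b h; have := hnn a; linarith
    have hqne : q ≠ 0 := fun h0 => by rw [h0] at hqpos; simp at hqpos
    have hmu : ((Complex.normSq μ : ℝ) : ℂ) = 1 := by
      have h := hrhs.symm.trans hlhs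
      have h2 : (((Complex.normSq μ : ℝ) : ℂ) - 1) * q = 0 := by ring_nf; linear_combination h
      rcases mul_eq_zero.1 h2 with h3 | h3
      · exact sub_eq_zero.mp h3
      · exact absurd h3 hqne
    have hmu' : Complex.normSq μ = 1 := by exact_mod_cast hmu
    rw [Complex.norm_def, hmu', Real.sqrt_one]
  · -- Part 3: bounded powers
    have hpow : ∀ (k : ℕ) (x : Fin n → ℝ),
        ((G ^ k) *ᵥ x) ⬝ᵥ (R *ᵥ ((G ^ k) *ᵥ x)) = x ⬝ᵥ (R *ᵥ x) := by
      intro k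
      induction k with
      | zero => intro x; simp [Matrix.one_mulVec]
      | succ k ih =>
        intro x
        rw [pow_succ, ← Matrix.mulVec_mulVec, ih (G *ᵥ x), part1 x]
    rcases Nat.eq_zero_or_pos n with hn | hn
    · refine ⟨0, fun k i j => ?_⟩
      subst hn
      exact i.elim0
    · haveI : Nonempty (Fin n) := ⟨⟨0, hn⟩⟩
      have hcont : Continuous fun x : Fin n → ℝ => x ⬝ᵥ (R *ᵥ x) := by
        simp only [dotProduct, Matrix.mulVec]
        fun_prop
      have hcpt : IsCompact (Metric.sphere (0 : Fin n → ℝ) 1) := isCompact_sphere 0 1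
      have hne : (Metric.sphere (0 : Fin n → ℝ) 1).Nonempty :=
        NormedSpace.sphere_nonempty.2 zero_le_one
      obtain ⟨u, hu_mem, hu_min⟩ := hcpt.exists_isMinOn hne hcont.continuousOn
      set c : ℝ := u ⬝ᵥ (R *ᵥ u) with hc
      have hu_ne : u ≠ 0 := by
        intro h0
        have := mem_sphere_zero_iff_norm.1 hu_mem
        rw [h0, norm_zero] at this
        norm_num at this
      have hcpos : 0 < c := hRpd u hu_ne
      have hbound : ∀ y : Fin n → ℝ, c * ‖y‖ ^ 2 ≤ y ⬝ᵥ (R *ᵥ y) := by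
        intro y
        by_cases hy : y = 0
        · simp [hy]
        · have hty : (0 : ℝ) < ‖y‖ := norm_pos_iff.2 hy
          set u' : Fin n → ℝ := ‖y‖⁻¹ • y with hu'
          have hu'mem : u' ∈ Metric.sphere (0 : Fin n → ℝ) 1 := by
            rw [mem_sphere_zero_iff_norm, hu', norm_smul, norm_inv, norm_norm,
              inv_mul_cancel₀ hty.ne']
          have hle := isMinOn_iff.1 hu_min u' hu'mem
          have hscale : u' ⬝ᵥ (R *ᵥ u') = ‖y‖⁻¹ ^ 2 * (y ⬝ᵥ (R *ᵥ y)) := by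
            rw [hu', Matrix.mulVec_smul, smul_dotProduct, dotProduct_smul,
              smul_eq_mul, smul_eq_mul]
            ring
          rw [hscale] at hle
          have h2 : c * ‖y‖ ^ 2 ≤ (‖y‖⁻¹ ^ 2 * (y ⬝ᵥ (R *ᵥ y))) * ‖y‖ ^ 2 := by
            nlinarith [sq_nonneg ‖y‖]
          calc c * ‖y‖ ^ 2 ≤ (‖y‖⁻¹ ^ 2 * (y ⬝ᵥ (R *ᵥ y))) * ‖y‖ ^ 2 := h2
            _ = y ⬝ᵥ (R *ᵥ y) := by field_simp
      have hdiag : ∀ j : Fin n, (Pi.single j 1 : Fin n → ℝ) ⬝ᵥ (R *ᵥ Pi.single j 1) = R j j := by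
        intro j
        simp [Matrix.mulVec_single, dotProduct, Pi.single_apply]
      have hdiag_nn : ∀ j : Fin n, 0 ≤ R j j := fun j => (hdiag j) ▸ hnn _
      set S : ℝ := ∑ j, R j j with hS
      have hRS : ∀ j : Fin n, R j j ≤ S :=
        fun j => Finset.single_le_sum (fun j' _ => hdiag_nn j') (Finset.mem_univ j)
      refine ⟨Real.sqrt (S / c), fun k i j => ?_⟩
      set y : Fin n → ℝ := (G ^ k) *ᵥ (Pi.single j 1) with hy
      have hyQ : y ⬝ᵥ (R *ᵥ y) = R j j := by rw [hy, hpow, hdiag]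
      have hynorm : ‖y‖ ^ 2 ≤ S / c := by
        have h1 : c * ‖y‖ ^ 2 ≤ S := by
          calc c * ‖y‖ ^ 2 ≤ y ⬝ᵥ (R *ᵥ y) := hbound y
            _ = R j j := hyQ
            _ ≤ S := hRS j
        rw [le_div_iff₀ hcpos]
        linarith
      have hyi : |(G ^ k) i j| = |y i| := by
        simp [hy, Matrix.mulVec_single]
      rw [hyi]
      have h3 : |y i| ≤ ‖y‖ := by
        rw [← Real.norm_eq_abs]
        exact norm_le_pi_norm y i
      have h4 : ‖y‖ ≤ Real.sqrt (S / c) := by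
        rw [show ‖y‖ = Real.sqrt (‖y‖ ^ 2) by rw [Real.sqrt_sq (norm_nonneg y)]]
        exact Real.sqrt_le_sqrt hynorm
      linarith
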